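/- Book–Otto theorem: for any context-free grammar G = (V,T,P,S) and any regular language L ⊆ (V ∪ T)*, the set pre*(L) of predecessors of L under the derivation relation of G is regular. -/

import Mathlib

/-- Symbols of a grammar: variables `V` or terminals `T`. -/
abbrev GSym (V T : Type) := V ⊕ T

/-- A context-free grammar: a set of productions and a start variable. -/
structure CFG (V T : Type) where
  P : Set (V × List (GSym V T))
  S : V

/-- One-step derivation: apply a production in an arbitrary context. -/
def CFG.DStep {V T : Type} (G : CFG V T) (x y : List (GSym V T)) : Prop :=
  ∃ (α γ : List (GSym V T)) (A : V) (β : List (GSym V T)),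
    (A, β) ∈ G.P ∧ x = α ++ Sum.inl A :: γ ∧ y = α ++ β ++ γ

/-- `⇒*`: reflexive-transitive closure of one-step derivation. -/
def CFG.Derives {V T : Type} (G : CFG V T) : List (GSym V T) → List (GSym V T) → Prop :=
  Relation.ReflTransGen G.DStep

/-- `pre*(L)`: the set of predecessors of `L`. -/
def CFG.preStar {V T : Type} (G : CFG V T) (L : Set (List (GSym V T))) :
    Set (List (GSym V T)) :=
  {α | ∃ β ∈ L, G.Derives α β}

/-- A language over `GSym V T` is regular if some DFA (with states `Fin n`) accepts it. -/
def IsRegularLang {V T : Type} (L : Set (List (GSym V T))) : Prop :=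
  ∃ (n : ℕ) (M : DFA (GSym V T) (Fin n)), ∀ w, w ∈ M.accepts ↔ w ∈ L

section Aux

variable {V T : Type} (G : CFG V T)

lemma dstep_append_left {x y : List (GSym V T)} (z : List (GSym V T)) (h : G.DStep x y) :
    G.DStep (z ++ x) (z ++ y) := by
  obtain ⟨a, c, A, b, hP, hx, hy⟩ := h
  exact ⟨z ++ a, c, A, b, hP, by simp [hx], by simp [hy]⟩

lemma dstep_append_right {x y : List (GSym V T)} (z : List (GSym V T)) (h : G.DStep x y) :
    G.DStep (x ++ z) (y ++ z) := by
  obtain ⟨a, c, A, b, hP, hx, hy⟩ := h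
  exact ⟨a, c ++ z, A, b, hP, by simp [hx], by simp [hy]⟩

lemma derives_append {x x' y y' : List (GSym V T)} (hx : G.Derives x x') (hy : G.Derives y y') :
    G.Derives (x ++ y) (x' ++ y') := by
  have h1 : G.Derives (x ++ y) (x' ++ y) :=
    Relation.ReflTransGen.lift (fun l => l ++ y) (fun a b h => dstep_append_right G y h) _ _ hx
  have h2 : G.Derives (x' ++ y) (x' ++ y') :=
    Relation.ReflTransGen.lift (fun l => x' ++ l) (fun a b h => dstep_append_left G x' h) _ _ hy
  exact h1.trans h2

lemma derives_singles {α : List (GSym V T)} {ws : List (List (GSym V T))}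
    (h : List.Forall₂ (fun a w => G.Derives [a] w) α ws) : G.Derives α ws.flatten := by
  induction h with
  | nil => exact Relation.ReflTransGen.refl
  | @cons a w l l' h1 _ ih =>
      have : G.Derives ([a] ++ l) (w ++ l'.flatten) := derives_append G h1 ih
      simpa using this

lemma derives_nil {w : List (GSym V T)} (h : G.Derives [] w) : w = [] := by
  rcases (Relation.ReflTransGen.cases_head h) with rfl | ⟨c, hc, _⟩
  · rfl
  · obtain ⟨a, c', A, b, _, hx, _⟩ := hc
    exact absurd hx (by simp)

lemma forall2_split {α' β' : Type} {R : α' → β' → Prop} :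
    ∀ {l₁ l₂ : List α'} {m : List β'}, List.Forall₂ R (l₁ ++ l₂) m →
      ∃ m₁ m₂, m = m₁ ++ m₂ ∧ List.Forall₂ R l₁ m₁ ∧ List.Forall₂ R l₂ m₂ := by
  intro l₁
  induction l₁ with
  | nil => intro l₂ m h; exact ⟨[], m, rfl, List.Forall₂.nil, h⟩
  | cons a l₁ ih =>
      intro l₂ m h
      rw [List.cons_append] at h
      cases h with
      | cons h1 h2 =>
          rename_i b m'
          obtain ⟨m₁, m₂, rfl, hm₁, hm₂⟩ := ih h2
          exact ⟨b :: m₁, m₂, rfl, List.Forall₂.cons h1 hm₁, hm₂⟩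

lemma derives_decomp {α β : List (GSym V T)} (h : G.Derives α β) :
    ∃ ws, List.Forall₂ (fun a w => G.Derives [a] w) α ws ∧ β = ws.flatten := by
  induction h using Relation.ReflTransGen.head_induction_on with
  | refl =>
      refine ⟨β.map (fun a => [a]), ?_, ?_⟩
      · induction β with
        | nil => exact List.Forall₂.nil
        | cons a l ih => exact List.Forall₂.cons Relation.ReflTransGen.refl ih
      · induction β with
        | nil => rfl
        | cons a l ih => simpa using ih
  | head hstep _ ih =>
      obtain ⟨ws, hws, rfl⟩ := ih
      obtain ⟨p, s, A, w, hP, rfl, rfl⟩ := hstep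
      rw [List.append_assoc] at hws
      obtain ⟨wp, rest, rfl, hwp, hrest⟩ := forall2_split hws
      obtain ⟨ww, wss, rfl, hww, hwss⟩ := forall2_split hrest
      refine ⟨wp ++ ww.flatten :: wss, ?_, by simp⟩
      refine List.rel_append hwp (List.Forall₂.cons ?_ hwss)
      exact Relation.ReflTransGen.head ⟨[], [], A, w, hP, by simp, by simp⟩
        (derives_singles G hww)

/-- The saturated NFA: read a symbol `a` by simulating `M` on any word derivable from `a`. -/
def satN {n : ℕ} (M : DFA (GSym V T) (Fin n)) : NFA (GSym V T) (Fin n) where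
  step q a := {q' | ∃ w, G.Derives [a] w ∧ M.evalFrom q w = q'}
  start := {M.start}
  accept := M.accept

lemma satN_evalFrom {n : ℕ} (M : DFA (GSym V T) (Fin n)) :
    ∀ (α : List (GSym V T)) (S : Set (Fin n)) (q' : Fin n),
      q' ∈ (satN G M).evalFrom S α ↔
        ∃ q ∈ S, ∃ w, G.Derives α w ∧ M.evalFrom q w = q' := by
  intro α
  induction α with
  | nil =>
      intro S q'
      simp only [NFA.evalFrom, List.foldl_nil]
      constructor
      · intro h
        exact ⟨q', h, [], Relation.ReflTransGen.refl, rfl⟩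
      · rintro ⟨q, hq, w, hder, hev⟩
        have := derives_nil G hder
        subst this
        have hq'' : q = q' := hev
        exact hq'' ▸ hq
  | cons a α ih =>
      intro S q'
      have : (satN G M).evalFrom S (a :: α) = (satN G M).evalFrom ((satN G M).stepSet S a) α := rfl
      rw [this, ih]
      constructor
      · rintro ⟨q₁, hq₁, w₂, hder₂, hev₂⟩
        rw [NFA.mem_stepSet] at hq₁
        obtain ⟨q, hqS, w₁, hder₁, hev₁⟩ := hq₁
        refine ⟨q, hqS, w₁ ++ w₂, ?_, ?_⟩
        · have : G.Derives ([a] ++ α) (w₁ ++ w₂) := derives_append G hder₁ hder₂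
          simpa using this
        · rw [DFA.evalFrom_of_append, hev₁, hev₂]
      · rintro ⟨q, hqS, w, hder, hev⟩
        obtain ⟨ws, hws, rfl⟩ := derives_decomp G hder
        cases hws with
        | cons h1 h2 =>
            rename_i w₁ rest
            refine ⟨M.evalFrom q w₁, ?_, rest.flatten, derives_singles G h2, ?_⟩
            · rw [NFA.mem_stepSet]
              exact ⟨q, hqS, w₁, h1, rfl⟩
            · rw [← DFA.evalFrom_of_append]
              simpa using hev

lemma satN_accepts {n : ℕ} (M : DFA (GSym V T) (Fin n)) (α : List (GSym V T)) :
    α ∈ (satN G M).accepts ↔ ∃ w, G.Derives α w ∧ w ∈ M.accepts := by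
  rw [NFA.mem_accepts]
  constructor
  · rintro ⟨q', hacc, hq'⟩
    rw [satN_evalFrom] at hq'
    obtain ⟨q, hq, w, hder, hev⟩ := hq'
    have hq : q = M.start := hq
    subst hq
    refine ⟨w, hder, ?_⟩
    show M.evalFrom M.start w ∈ M.accept
    rw [hev]; exact hacc
  · rintro ⟨w, hder, hacc⟩
    refine ⟨M.evalFrom M.start w, hacc, ?_⟩
    rw [satN_evalFrom]
    exact ⟨M.start, rfl, w, hder, rfl⟩

/-- Transport a DFA along an equivalence of state types. -/
def DFA.myReindex {A σ τ : Type} (e : σ ≃ τ) (M : DFA A σ) : DFA A τ where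
  step q a := e (M.step (e.symm q) a)
  start := e M.start
  accept := e '' M.accept

lemma myReindex_evalFrom {A σ τ : Type} (e : σ ≃ τ) (M : DFA A σ) :
    ∀ (x : List A) (s : σ), (DFA.myReindex e M).evalFrom (e s) x = e (M.evalFrom s x) := by
  intro x
  induction x with
  | nil => intro s; rfl
  | cons a x ih =>
      intro s
      have : (DFA.myReindex e M).evalFrom (e s) (a :: x)
          = (DFA.myReindex e M).evalFrom ((DFA.myReindex e M).step (e s) a) x := rfl
      rw [this]
      have hstep : (DFA.myReindex e M).step (e s) a = e (M.step s a) := by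
        simp [DFA.myReindex]
      rw [hstep, ih]
      rfl

lemma myReindex_accepts {A σ τ : Type} (e : σ ≃ τ) (M : DFA A σ) (x : List A) :
    x ∈ (DFA.myReindex e M).accepts ↔ x ∈ M.accepts := by
  have h : (DFA.myReindex e M).eval x = e (M.eval x) := myReindex_evalFrom e M x M.start
  constructor
  · intro hx
    have h2 : (DFA.myReindex e M).eval x ∈ e '' M.accept := hx
    rw [h] at h2
    obtain ⟨y, hy, hxy⟩ := h2
    have hy2 : y = M.eval x := e.injective hxy
    show M.eval x ∈ M.accept
    exact hy2 ▸ hy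
  · intro hx
    show (DFA.myReindex e M).eval x ∈ e '' M.accept
    rw [h]
    exact ⟨_, hx, rfl⟩

end Aux

theorem book_otto {V T : Type} (G : CFG V T) (L : Set (List (GSym V T)))
    (hL : IsRegularLang L) : IsRegularLang (G.preStar L) := by
  obtain ⟨n, M, hM⟩ := hL
  classical
  let N := satN G M
  let D := N.toDFA
  let e : Set (Fin n) ≃ Fin (Fintype.card (Set (Fin n))) := Fintype.equivFin _
  refine ⟨Fintype.card (Set (Fin n)), DFA.myReindex e D, ?_⟩
  intro w
  rw [myReindex_accepts]
  have hD : w ∈ D.accepts ↔ w ∈ N.accepts := by rw [NFA.toDFA_correct]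
  rw [hD, satN_accepts]
  constructor
  · rintro ⟨β, hder, hacc⟩
    exact ⟨β, (hM β).mp hacc, hder⟩
  · rintro ⟨β, hβL, hder⟩
    exact ⟨β, hder, (hM β).mpr hβL⟩
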